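/- Contraction inequality for the reweighted univariate loss: let T be a nonempty index set, m ∈ ℕ, and {(I_j, ω_j)}_{j∈[J]} a finite family with I_j ⊆ [m] and ω_j > 0. Let v⁺, v⁻ : [m] × T → ℝ, let a⁺, a⁻ ≥ 0 be constants, and let ℓ : ℝ → ℝ be ρ-Lipschitz. Assume that all the suprema below are over sets bounded above. Then 2^{−m} ∑_{σ∈{−1,1}^m} ∑_{j∈[J]} ω_j · sup_{t∈T} ∑_{i∈I_j} σ_i ( a⁺ ℓ(v⁺_i(t)) + a⁻ ℓ(−v⁻_i(t)) ) ≤ 2ρ · 2^{−2m} ∑_{(σ⁺,σ⁻)∈{−1,1}^m×{−1,1}^m} ∑_{j∈[J]} ω_j · sup_{t∈T} ∑_{i∈I_j} ( σ⁺_i a⁺ v⁺_i(t) + σ⁻_i a⁻ v⁻_i(t) ). -/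

import Mathlib

open scoped BigOperators
namespace FRCU
noncomputable section

def eps (b : Bool) : ℝ := if b then 1 else -1
lemma eps_not (b : Bool) : eps (!b) = - eps b := by cases b <;> simp [eps]
lemma eps_mul_le_abs (b : Bool) (x : ℝ) : eps b * x ≤ |x| := by
  cases b <;> simp [eps]
  · exact neg_le_abs x
  · exact le_abs_self x

variable {T : Type*} [Nonempty T]

lemma bdd_of_le {f g : T → ℝ} (h : ∀ t, f t ≤ g t)
    (hg : BddAbove (Set.range g)) : BddAbove (Set.range f) := by
  obtain ⟨b, hb⟩ := hg
  exact ⟨b, by rintro _ ⟨t, rfl⟩; exact (h t).trans (hb ⟨t, rfl⟩)⟩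

lemma bdd_add {f g : T → ℝ} (hf : BddAbove (Set.range f))
    (hg : BddAbove (Set.range g)) :
    BddAbove (Set.range fun t => f t + g t) := BddAbove.range_add hf hg

lemma bdd_const_mul {c : ℝ} (hc : 0 ≤ c) {f : T → ℝ}
    (hf : BddAbove (Set.range f)) :
    BddAbove (Set.range fun t => c * f t) := by
  obtain ⟨b, hb⟩ := hf
  refine ⟨c * b, ?_⟩
  rintro _ ⟨t, rfl⟩
  exact mul_le_mul_of_nonneg_left (hb ⟨t, rfl⟩) hc

lemma sum_eps_le {ι : Type*} {A : Finset ι} {f : ι → ℝ} {Mt : ℝ}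
    (h : ∀ i ∈ A, |f i| ≤ Mt) (c : ι → Bool) :
    ∑ i ∈ A, eps (c i) * f i ≤ (A.card : ℝ) * Mt := by
  calc ∑ i ∈ A, eps (c i) * f i ≤ ∑ i ∈ A, Mt :=
        Finset.sum_le_sum fun i hi => (eps_mul_le_abs _ _).trans (h i hi)
    _ = (A.card : ℝ) * Mt := by rw [Finset.sum_const, nsmul_eq_mul]

def flipAt {m : ℕ} (k : Fin m) (σ : Fin m → Bool) : Fin m → Bool :=
  Function.update σ k (!(σ k))

lemma flipAt_self {m : ℕ} (k : Fin m) (σ : Fin m → Bool) :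
    flipAt k σ k = !(σ k) := by simp [flipAt]

lemma flipAt_ne {m : ℕ} (k j : Fin m) (σ : Fin m → Bool) (h : j ≠ k) :
    flipAt k σ j = σ j := Function.update_of_ne h _ _

lemma flipAt_invol {m : ℕ} (k : Fin m) : Function.Involutive (flipAt k) := by
  intro σ; funext j
  rcases eq_or_ne j k with rfl | h
  · simp [flipAt]
  · rw [flipAt_ne k j _ h, flipAt_ne k j _ h]

lemma sum_flipAt {m : ℕ} (k : Fin m) (f : (Fin m → Bool) → ℝ) :
    ∑ σ : Fin m → Bool, f (flipAt k σ) = ∑ σ : Fin m → Bool, f σ :=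
  Fintype.sum_bijective _ (flipAt_invol k).bijective _ _ (fun _ => rfl)

lemma keyStep (R F G : T → ℝ)
    (hLip : ∀ t s, |F t - F s| ≤ |G t - G s|)
    (h3 : BddAbove (Set.range fun t => R t + G t))
    (h4 : BddAbove (Set.range fun t => R t - G t)) :
    (⨆ t, (R t + F t)) + (⨆ t, (R t - F t))
      ≤ (⨆ t, (R t + G t)) + (⨆ t, (R t - G t)) := by
  set Y : ℝ := (⨆ t, (R t + G t)) + (⨆ t, (R t - G t)) with hY
  have hts : ∀ t s, (R t + F t) + (R s - F s) ≤ Y := by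
    intro t s
    have habs : F t - F s ≤ |G t - G s| := (le_abs_self _).trans (hLip t s)
    rcases le_total (G s) (G t) with hG | hG
    · have h5 : R t + G t ≤ ⨆ u, (R u + G u) := le_ciSup h3 t
      have h6 : R s - G s ≤ ⨆ u, (R u - G u) := le_ciSup h4 s
      have he : |G t - G s| = G t - G s := abs_of_nonneg (by linarith)
      rw [he] at habs; rw [hY]; linarith
    · have h5 : R s + G s ≤ ⨆ u, (R u + G u) := le_ciSup h3 s
      have h6 : R t - G t ≤ ⨆ u, (R u - G u) := le_ciSup h4 t
      have he : |G t - G s| = -(G t - G s) := abs_of_nonpos (by linarith)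
      rw [he] at habs; rw [hY]; linarith
  have h7 : ∀ s, (⨆ t, (R t + F t)) ≤ Y - (R s - F s) := fun s =>
    ciSup_le (fun t => by linarith [hts t s])
  have h8 : (⨆ s, (R s - F s)) ≤ Y - (⨆ t, (R t + F t)) :=
    ciSup_le (fun s => by linarith [h7 s])
  linarith

lemma reshape (b : Bool) (Fk R : T → ℝ) :
    (⨆ t, (eps b * Fk t + R t)) + (⨆ t, (eps (!b) * Fk t + R t))
      = (⨆ t, (R t + Fk t)) + (⨆ t, (R t - Fk t)) := by
  have e1 : (⨆ t, (eps true * Fk t + R t)) = ⨆ t, (R t + Fk t) :=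
    iSup_congr fun t => by simp [eps]; ring
  have e2 : (⨆ t, (eps false * Fk t + R t)) = ⨆ t, (R t - Fk t) :=
    iSup_congr fun t => by simp [eps]; ring
  cases b
  · rw [Bool.not_false, e1, e2]; ring
  · rw [Bool.not_true, e1, e2]

lemma contraction_aux {m : ℕ} (A : Finset (Fin m)) (F G : Fin m → T → ℝ)
    (M : T → ℝ) (hM : BddAbove (Set.range M))
    (hLip : ∀ i ∈ A, ∀ t s, |F i t - F i s| ≤ |G i t - G i s|)
    (hFM : ∀ i ∈ A, ∀ t, |F i t| ≤ M t) (hGM : ∀ i ∈ A, ∀ t, |G i t| ≤ M t)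
    (H : (Fin m → Bool) → T → ℝ)
    (hHind : ∀ (σ : Fin m → Bool) (k : Fin m), k ∈ A → ∀ b,
      H (Function.update σ k b) = H σ)
    (hH : ∀ σ, BddAbove (Set.range (H σ))) :
    ∑ σ : Fin m → Bool, ⨆ t, (∑ i ∈ A, eps (σ i) * F i t + H σ t)
      ≤ ∑ σ : Fin m → Bool, ⨆ t, (∑ i ∈ A, eps (σ i) * G i t + H σ t) := by
  classical
  induction A using Finset.induction_on generalizing H with
  | empty => simp
  | insert k A' hk ih =>
    have hmemk : k ∈ insert k A' := Finset.mem_insert_self k A'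
    have hLip' : ∀ i ∈ A', ∀ t s, |F i t - F i s| ≤ |G i t - G i s| :=
      fun i hi => hLip i (Finset.mem_insert_of_mem hi)
    have hFM' : ∀ i ∈ A', ∀ t, |F i t| ≤ M t :=
      fun i hi => hFM i (Finset.mem_insert_of_mem hi)
    have hGM' : ∀ i ∈ A', ∀ t, |G i t| ≤ M t :=
      fun i hi => hGM i (Finset.mem_insert_of_mem hi)
    -- the "rest" function
    set Rst : (Fin m → Bool) → T → ℝ :=
      fun σ t => ∑ i ∈ A', eps (σ i) * F i t + H σ t with hRst
    have hRstflip : ∀ σ t, Rst (flipAt k σ) t = Rst σ t := by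
      intro σ t
      simp only [hRst]
      congr 1
      · exact Finset.sum_congr rfl fun i hi => by
          rw [flipAt_ne k i σ (ne_of_mem_of_not_mem hi hk)]
      · exact congrFun (hHind σ k hmemk (!(σ k))) t
    -- boundedness of Rst ± W
    have hRBdd : ∀ (σ : Fin m → Bool) (W : T → ℝ), (∀ t, |W t| ≤ M t) →
        BddAbove (Set.range fun t => Rst σ t + W t) ∧
        BddAbove (Set.range fun t => Rst σ t - W t) := by
      intro σ W hW
      have hgb : BddAbove (Set.range fun t =>
          ((A'.card : ℝ) * M t + M t) + H σ t) :=
        bdd_add (bdd_add (bdd_const_mul (Nat.cast_nonneg _) hM) hM) (hH σ)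
      constructor
      · refine bdd_of_le (fun t => ?_) hgb
        have h1 := sum_eps_le (fun i hi => hFM' i hi t) σ
        have h2 := hW t
        have h3 := le_abs_self (W t)
        simp only [hRst]; linarith
      · refine bdd_of_le (fun t => ?_) hgb
        have h1 := sum_eps_le (fun i hi => hFM' i hi t) σ
        have h2 := hW t
        have h3 := neg_le_abs (W t)
        simp only [hRst]; linarith
    -- Step 1 : swap coordinate k
    have step1 : ∑ σ : Fin m → Bool, (⨆ t, (eps (σ k) * F k t + Rst σ t))
        ≤ ∑ σ : Fin m → Bool, (⨆ t, (eps (σ k) * G k t + Rst σ t)) := by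
      have key : ∀ σ : Fin m → Bool,
          (⨆ t, (eps (σ k) * F k t + Rst σ t))
            + (⨆ t, (eps (flipAt k σ k) * F k t + Rst (flipAt k σ) t))
          ≤ (⨆ t, (eps (σ k) * G k t + Rst σ t))
            + (⨆ t, (eps (flipAt k σ k) * G k t + Rst (flipAt k σ) t)) := by
        intro σ
        have e1 : ∀ (W : T → ℝ),
            (⨆ t, (eps (flipAt k σ k) * W t + Rst (flipAt k σ) t))
              = ⨆ t, (eps (!(σ k)) * W t + Rst σ t) := fun W =>
          iSup_congr fun t => by rw [flipAt_self, hRstflip]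
        rw [e1, e1, reshape (σ k) (F k) (fun t => Rst σ t),
          reshape (σ k) (G k) (fun t => Rst σ t)]
        exact keyStep _ _ _ (hLip k hmemk)
          (hRBdd σ (G k) (hGM k hmemk)).1 (hRBdd σ (G k) (hGM k hmemk)).2
      have hsum2 := Finset.sum_le_sum
        (fun σ (_ : σ ∈ (Finset.univ : Finset (Fin m → Bool))) => key σ)
      rw [Finset.sum_add_distrib, Finset.sum_add_distrib] at hsum2
      have eF : ∑ σ : Fin m → Bool,
          (⨆ t, (eps (flipAt k σ k) * F k t + Rst (flipAt k σ) t))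
          = ∑ σ : Fin m → Bool, (⨆ t, (eps (σ k) * F k t + Rst σ t)) :=
        sum_flipAt k (fun τ => ⨆ t, (eps (τ k) * F k t + Rst τ t))
      have eG : ∑ σ : Fin m → Bool,
          (⨆ t, (eps (flipAt k σ k) * G k t + Rst (flipAt k σ) t))
          = ∑ σ : Fin m → Bool, (⨆ t, (eps (σ k) * G k t + Rst σ t)) :=
        sum_flipAt k (fun τ => ⨆ t, (eps (τ k) * G k t + Rst τ t))
      rw [eF, eG] at hsum2
      linarith
    -- Step 2 : apply the induction hypothesis with H' σ t = eps (σ k) * G k t + H σ t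
    have hneq : ∀ k' ∈ A', k ≠ k' := fun k' hk' h => hk (h ▸ hk')
    have step2 := ih hLip' hFM' hGM'
      (fun σ t => eps (σ k) * G k t + H σ t)
      (by
        intro σ k' hk' b
        funext t
        show eps (Function.update σ k' b k) * G k t + H (Function.update σ k' b) t
          = eps (σ k) * G k t + H σ t
        have h1 : Function.update σ k' b k = σ k :=
          Function.update_of_ne (hneq k' hk') _ _
        rw [h1]
        have h2 := congrFun (hHind σ k' (Finset.mem_insert_of_mem hk') b) t
        rw [h2])
      (by
        intro σ
        refine bdd_of_le (fun t => ?_) (bdd_add hM (hH σ))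
        show eps (σ k) * G k t + H σ t ≤ M t + H σ t
        have h1 := (eps_mul_le_abs (σ k) (G k t)).trans (hGM k hmemk t)
        linarith)
    -- assemble
    have eL : ∀ σ : Fin m → Bool,
        (⨆ t, (∑ i ∈ insert k A', eps (σ i) * F i t + H σ t))
          = ⨆ t, (eps (σ k) * F k t + Rst σ t) := fun σ =>
      iSup_congr fun t => by
        rw [Finset.sum_insert hk]; simp only [hRst]; ring
    have eM : ∀ σ : Fin m → Bool,
        (⨆ t, (eps (σ k) * G k t + Rst σ t))
          = ⨆ t, (∑ i ∈ A', eps (σ i) * F i t + (eps (σ k) * G k t + H σ t)) :=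
      fun σ => iSup_congr fun t => by simp only [hRst]; ring
    have eR : ∀ σ : Fin m → Bool,
        (⨆ t, (∑ i ∈ A', eps (σ i) * G i t + (eps (σ k) * G k t + H σ t)))
          = ⨆ t, (∑ i ∈ insert k A', eps (σ i) * G i t + H σ t) := fun σ =>
      iSup_congr fun t => by rw [Finset.sum_insert hk]; ring
    calc ∑ σ : Fin m → Bool, ⨆ t, (∑ i ∈ insert k A', eps (σ i) * F i t + H σ t)
        = ∑ σ : Fin m → Bool, (⨆ t, (eps (σ k) * F k t + Rst σ t)) :=
          Finset.sum_congr rfl fun σ _ => eL σ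
      _ ≤ ∑ σ : Fin m → Bool, (⨆ t, (eps (σ k) * G k t + Rst σ t)) := step1
      _ = ∑ σ : Fin m → Bool, (⨆ t, (∑ i ∈ A', eps (σ i) * F i t
            + (eps (σ k) * G k t + H σ t))) :=
          Finset.sum_congr rfl fun σ _ => eM σ
      _ ≤ ∑ σ : Fin m → Bool, (⨆ t, (∑ i ∈ A', eps (σ i) * G i t
            + (eps (σ k) * G k t + H σ t))) := step2
      _ = ∑ σ : Fin m → Bool, ⨆ t, (∑ i ∈ insert k A', eps (σ i) * G i t + H σ t) :=
          Finset.sum_congr rfl fun σ _ => eR σ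


lemma bdd_const (c : ℝ) : BddAbove (Set.range fun _ : T => c) :=
  ⟨c, by rintro _ ⟨t, rfl⟩; exact le_rfl⟩

lemma bdd_sum {κ : Type*} (s : Finset κ) (f : κ → T → ℝ)
    (h : ∀ k ∈ s, BddAbove (Set.range (f k))) :
    BddAbove (Set.range fun t => ∑ k ∈ s, f k t) := by
  classical
  induction s using Finset.induction_on with
  | empty => simpa using bdd_const (T := T) 0
  | insert a s' hk ih =>
    simp only [Finset.sum_insert hk]
    exact bdd_add (h a (Finset.mem_insert_self a s'))
      (ih fun k hks => h k (Finset.mem_insert_of_mem hks))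

lemma bdd_abs {f : T → ℝ} (h1 : BddAbove (Set.range f))
    (h2 : BddAbove (Set.range fun t => -f t)) :
    BddAbove (Set.range fun t => |f t|) := by
  obtain ⟨b1, hb1⟩ := h1
  obtain ⟨b2, hb2⟩ := h2
  refine ⟨max b1 b2, ?_⟩
  rintro _ ⟨t, rfl⟩
  rcases abs_cases (f t) with ⟨h, _⟩ | ⟨h, _⟩
  · show |f t| ≤ max b1 b2
    rw [h]; exact le_max_of_le_left (hb1 ⟨t, rfl⟩)
  · show |f t| ≤ max b1 b2
    rw [h]; exact le_max_of_le_right (hb2 ⟨t, rfl⟩)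

lemma sum_eps_zero {m : ℕ} (i : Fin m) :
    ∑ σ : Fin m → Bool, eps (σ i) = 0 := by
  have h := sum_flipAt i (fun σ => eps (σ i))
  simp only [flipAt_self, eps_not, Finset.sum_neg_distrib] at h
  linarith

lemma eps_decide (x : ℝ) : eps (decide (0 ≤ x)) * x = |x| := by
  rcases le_or_gt 0 x with h | h
  · simp [eps, h, abs_of_nonneg h]
  · simp [eps, not_le.mpr h, abs_of_neg h]

lemma perj {m : ℕ} (Ij : Finset (Fin m)) (vp vm : Fin m → T → ℝ)
    (ap am ρ : ℝ) (hap : 0 ≤ ap) (ham : 0 ≤ am) (hρ : 0 ≤ ρ)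
    (ℓ : ℝ → ℝ) (hℓ : ∀ a b, |ℓ a - ℓ b| ≤ ρ * |a - b|)
    (hbdd₂ : ∀ σp σm : Fin m → Bool, BddAbove (Set.range fun t =>
      ∑ i ∈ Ij, (eps (σp i) * (ap * vp i t) + eps (σm i) * (am * vm i t)))) :
    ∑ σ : Fin m → Bool, ⨆ t, ∑ i ∈ Ij, eps (σ i) *
        (ap * ℓ (vp i t) + am * ℓ (-vm i t))
      ≤ 2 * ρ * (((2 : ℝ) ^ m)⁻¹ *
          ∑ p : (Fin m → Bool) × (Fin m → Bool), ⨆ t, ∑ i ∈ Ij,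
            (eps (p.1 i) * (ap * vp i t) + eps (p.2 i) * (am * vm i t))) := by
  classical
  -- the master bound function
  set S : T → ℝ := fun t => ∑ i ∈ Ij, (|ap * vp i t| + |am * vm i t|) with hSdef
  have hSnonneg : ∀ t, 0 ≤ S t := fun t =>
    Finset.sum_nonneg fun i _ => add_nonneg (abs_nonneg _) (abs_nonneg _)
  have hSbdd : BddAbove (Set.range S) := by
    have habsF : ∀ σp σm : Fin m → Bool, BddAbove (Set.range fun t =>
        |∑ i ∈ Ij, (eps (σp i) * (ap * vp i t) + eps (σm i) * (am * vm i t))|) := by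
      intro σp σm
      refine bdd_abs (hbdd₂ σp σm) ?_
      have hneg : (fun t => -∑ i ∈ Ij,
          (eps (σp i) * (ap * vp i t) + eps (σm i) * (am * vm i t)))
          = fun t => ∑ i ∈ Ij, (eps ((!σp i)) * (ap * vp i t)
              + eps ((!σm i)) * (am * vm i t)) := by
        funext t
        rw [← Finset.sum_neg_distrib]
        exact Finset.sum_congr rfl fun i _ => by rw [eps_not, eps_not]; ring
      rw [hneg]
      exact hbdd₂ (fun i => !σp i) (fun i => !σm i)
    refine bdd_of_le (fun t => ?_)
      (bdd_sum Finset.univ (fun p : (Fin m → Bool) × (Fin m → Bool) => fun t =>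
        |∑ i ∈ Ij, (eps (p.1 i) * (ap * vp i t) + eps (p.2 i) * (am * vm i t))|)
        (fun p _ => habsF p.1 p.2))
    set σp : Fin m → Bool := fun i => decide (0 ≤ ap * vp i t) with hσp
    set σm : Fin m → Bool := fun i => decide (0 ≤ am * vm i t) with hσm
    have h1 : S t = ∑ i ∈ Ij, (eps (σp i) * (ap * vp i t) + eps (σm i) * (am * vm i t)) :=
      Finset.sum_congr rfl fun i _ => by rw [hσp, hσm]; rw [eps_decide, eps_decide]
    have h3 : |∑ i ∈ Ij, (eps (σp i) * (ap * vp i t) + eps (σm i) * (am * vm i t))|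
        ≤ ∑ p : (Fin m → Bool) × (Fin m → Bool),
            |∑ i ∈ Ij, (eps (p.1 i) * (ap * vp i t) + eps (p.2 i) * (am * vm i t))| :=
      Finset.single_le_sum (f := fun p : (Fin m → Bool) × (Fin m → Bool) =>
        |∑ i ∈ Ij, (eps (p.1 i) * (ap * vp i t) + eps (p.2 i) * (am * vm i t))|)
        (fun p _ => abs_nonneg _) (Finset.mem_univ (σp, σm))
    have h2 := le_abs_self (∑ i ∈ Ij, (eps (σp i) * (ap * vp i t) + eps (σm i) * (am * vm i t)))
    rw [h1]; linarith

  -- the bound function M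
  set M : T → ℝ := fun t => (ap * |ℓ 0| + am * |ℓ 0|) + ρ * S t with hMdef
  have hMbdd : BddAbove (Set.range M) :=
    bdd_add (bdd_const _) (bdd_const_mul hρ hSbdd)
  have hSle : ∀ i ∈ Ij, ∀ t, |ap * vp i t| ≤ S t := by
    intro i hi t
    have h1 : |ap * vp i t| + |am * vm i t| ≤ S t :=
      Finset.single_le_sum (f := fun i => |ap * vp i t| + |am * vm i t|)
        (fun i _ => add_nonneg (abs_nonneg _) (abs_nonneg _)) hi
    have h0 := abs_nonneg (am * vm i t)
    linarith
  have hSle' : ∀ i ∈ Ij, ∀ t, |am * vm i t| ≤ S t := by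
    intro i hi t
    have h1 : |ap * vp i t| + |am * vm i t| ≤ S t :=
      Finset.single_le_sum (f := fun i => |ap * vp i t| + |am * vm i t|)
        (fun i _ => add_nonneg (abs_nonneg _) (abs_nonneg _)) hi
    have h0 := abs_nonneg (ap * vp i t)
    linarith
  have hℓbound : ∀ x : ℝ, |ℓ x| ≤ ρ * |x| + |ℓ 0| := by
    intro x
    have h1 : |ℓ x| ≤ |ℓ x - ℓ 0| + |ℓ 0| := by
      have := abs_add_le (ℓ x - ℓ 0) (ℓ 0); simpa using this
    have h2 := hℓ x 0
    rw [sub_zero] at h2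
    linarith
  -- P-side data
  have hLipP : ∀ i ∈ Ij, ∀ t s,
      |(ap * ℓ (vp i t)) - (ap * ℓ (vp i s))|
        ≤ |(ρ * (ap * vp i t)) - (ρ * (ap * vp i s))| := by
    intro i _ t s
    have e1 : |(ap * ℓ (vp i t)) - (ap * ℓ (vp i s))|
        = ap * |ℓ (vp i t) - ℓ (vp i s)| := by
      rw [← mul_sub, abs_mul, abs_of_nonneg hap]
    have e2 : |(ρ * (ap * vp i t)) - (ρ * (ap * vp i s))|
        = ρ * ap * |vp i t - vp i s| := by
      rw [show ρ * (ap * vp i t) - ρ * (ap * vp i s)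
          = (ρ * ap) * (vp i t - vp i s) by ring,
        abs_mul, abs_of_nonneg (mul_nonneg hρ hap)]
    rw [e1, e2]
    calc ap * |ℓ (vp i t) - ℓ (vp i s)| ≤ ap * (ρ * |vp i t - vp i s|) :=
          mul_le_mul_of_nonneg_left (hℓ _ _) hap
      _ = ρ * ap * |vp i t - vp i s| := by ring
  have hFMP : ∀ i ∈ Ij, ∀ t, |ap * ℓ (vp i t)| ≤ M t := by
    intro i hi t
    have hx := hℓbound (vp i t)
    have h4 := hSle i hi t
    calc |ap * ℓ (vp i t)| = ap * |ℓ (vp i t)| := by rw [abs_mul, abs_of_nonneg hap]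
      _ ≤ ap * (ρ * |vp i t| + |ℓ 0|) := mul_le_mul_of_nonneg_left hx hap
      _ = ap * |ℓ 0| + ρ * |ap * vp i t| := by rw [abs_mul, abs_of_nonneg hap]; ring
      _ ≤ ap * |ℓ 0| + ρ * S t :=
          add_le_add_right (mul_le_mul_of_nonneg_left h4 hρ) _
      _ ≤ M t := by
          have hMt : M t = ap * |ℓ 0| + am * |ℓ 0| + ρ * S t := rfl
          rw [hMt]
          have := mul_nonneg ham (abs_nonneg (ℓ 0)); linarith
  have hGMP : ∀ i ∈ Ij, ∀ t, |ρ * (ap * vp i t)| ≤ M t := by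
    intro i hi t
    have h4 := hSle i hi t
    have e : |ρ * (ap * vp i t)| = ρ * |ap * vp i t| := by
      rw [abs_mul, abs_of_nonneg hρ]
    rw [e]
    have h7 := mul_le_mul_of_nonneg_left h4 hρ
    have hMt : M t = ap * |ℓ 0| + am * |ℓ 0| + ρ * S t := rfl
    rw [hMt]
    have h5 := mul_nonneg hap (abs_nonneg (ℓ 0))
    have h6 := mul_nonneg ham (abs_nonneg (ℓ 0))
    linarith
  -- Q-side data
  have hLipQ : ∀ i ∈ Ij, ∀ t s,
      |(am * ℓ (-vm i t)) - (am * ℓ (-vm i s))|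
        ≤ |(ρ * (am * vm i t)) - (ρ * (am * vm i s))| := by
    intro i _ t s
    have e1 : |(am * ℓ (-vm i t)) - (am * ℓ (-vm i s))|
        = am * |ℓ (-vm i t) - ℓ (-vm i s)| := by
      rw [← mul_sub, abs_mul, abs_of_nonneg ham]
    have e2 : |(ρ * (am * vm i t)) - (ρ * (am * vm i s))|
        = ρ * am * |vm i t - vm i s| := by
      rw [show ρ * (am * vm i t) - ρ * (am * vm i s)
          = (ρ * am) * (vm i t - vm i s) by ring,
        abs_mul, abs_of_nonneg (mul_nonneg hρ ham)]
    rw [e1, e2]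
    have e3 : |(-vm i t) - (-vm i s)| = |vm i t - vm i s| := by
      rw [show (-vm i t) - (-vm i s) = -(vm i t - vm i s) by ring, abs_neg]
    calc am * |ℓ (-vm i t) - ℓ (-vm i s)|
        ≤ am * (ρ * |(-vm i t) - (-vm i s)|) :=
          mul_le_mul_of_nonneg_left (hℓ _ _) ham
      _ = ρ * am * |vm i t - vm i s| := by rw [e3]; ring
  have hFMQ : ∀ i ∈ Ij, ∀ t, |am * ℓ (-vm i t)| ≤ M t := by
    intro i hi t
    have hx := hℓbound (-vm i t)
    rw [abs_neg] at hx
    have h4 := hSle' i hi t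
    calc |am * ℓ (-vm i t)| = am * |ℓ (-vm i t)| := by
          rw [abs_mul, abs_of_nonneg ham]
      _ ≤ am * (ρ * |vm i t| + |ℓ 0|) := mul_le_mul_of_nonneg_left hx ham
      _ = am * |ℓ 0| + ρ * |am * vm i t| := by rw [abs_mul, abs_of_nonneg ham]; ring
      _ ≤ am * |ℓ 0| + ρ * S t :=
          add_le_add_right (mul_le_mul_of_nonneg_left h4 hρ) _
      _ ≤ M t := by
          have hMt : M t = ap * |ℓ 0| + am * |ℓ 0| + ρ * S t := rfl
          rw [hMt]
          have := mul_nonneg hap (abs_nonneg (ℓ 0)); linarith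
  have hGMQ : ∀ i ∈ Ij, ∀ t, |ρ * (am * vm i t)| ≤ M t := by
    intro i hi t
    have h4 := hSle' i hi t
    have e : |ρ * (am * vm i t)| = ρ * |am * vm i t| := by
      rw [abs_mul, abs_of_nonneg hρ]
    rw [e]
    have h7 := mul_le_mul_of_nonneg_left h4 hρ
    have hMt : M t = ap * |ℓ 0| + am * |ℓ 0| + ρ * S t := rfl
    rw [hMt]
    have h5 := mul_nonneg hap (abs_nonneg (ℓ 0))
    have h6 := mul_nonneg ham (abs_nonneg (ℓ 0))
    linarith
  -- contraction on each side
  have hcontrP := contraction_aux Ij (fun i t => ap * ℓ (vp i t))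
    (fun i t => ρ * (ap * vp i t)) M hMbdd hLipP hFMP hGMP
    (fun _ _ => 0) (fun _ _ _ _ => rfl) (fun _ => bdd_const 0)
  have hcontrQ := contraction_aux Ij (fun i t => am * ℓ (-vm i t))
    (fun i t => ρ * (am * vm i t)) M hMbdd hLipQ hFMQ hGMQ
    (fun _ _ => 0) (fun _ _ _ _ => rfl) (fun _ => bdd_const 0)
  have hP2 : ∑ σ : Fin m → Bool, (⨆ t, ∑ i ∈ Ij, eps (σ i) * (ap * ℓ (vp i t)))
      ≤ ρ * ∑ σ : Fin m → Bool, (⨆ t, ∑ i ∈ Ij, eps (σ i) * (ap * vp i t)) := by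
    have e1 : ∀ σ : Fin m → Bool,
        (⨆ t, ∑ i ∈ Ij, eps (σ i) * (ap * ℓ (vp i t)))
          = ⨆ t, (∑ i ∈ Ij, eps (σ i) * (ap * ℓ (vp i t)) + 0) :=
      fun σ => iSup_congr fun t => by ring
    have e2 : ∀ σ : Fin m → Bool,
        (⨆ t, (∑ i ∈ Ij, eps (σ i) * (ρ * (ap * vp i t)) + 0))
          = ρ * ⨆ t, ∑ i ∈ Ij, eps (σ i) * (ap * vp i t) := by
      intro σ
      have e3 : ∀ t, ∑ i ∈ Ij, eps (σ i) * (ρ * (ap * vp i t)) + 0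
          = ρ * ∑ i ∈ Ij, eps (σ i) * (ap * vp i t) := by
        intro t
        rw [add_zero, Finset.mul_sum]
        exact Finset.sum_congr rfl fun i _ => by ring
      calc (⨆ t, (∑ i ∈ Ij, eps (σ i) * (ρ * (ap * vp i t)) + 0))
          = ⨆ t, ρ * ∑ i ∈ Ij, eps (σ i) * (ap * vp i t) := iSup_congr e3
        _ = ρ * ⨆ t, ∑ i ∈ Ij, eps (σ i) * (ap * vp i t) :=
            (Real.mul_iSup_of_nonneg hρ _).symm
    calc ∑ σ : Fin m → Bool, (⨆ t, ∑ i ∈ Ij, eps (σ i) * (ap * ℓ (vp i t)))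
        = ∑ σ : Fin m → Bool, ⨆ t, (∑ i ∈ Ij, eps (σ i) * (ap * ℓ (vp i t)) + 0) :=
          Finset.sum_congr rfl fun σ _ => e1 σ
      _ ≤ ∑ σ : Fin m → Bool, ⨆ t, (∑ i ∈ Ij, eps (σ i) * (ρ * (ap * vp i t)) + 0) :=
          hcontrP
      _ = ∑ σ : Fin m → Bool, ρ * ⨆ t, ∑ i ∈ Ij, eps (σ i) * (ap * vp i t) :=
          Finset.sum_congr rfl fun σ _ => e2 σ
      _ = ρ * ∑ σ : Fin m → Bool, ⨆ t, ∑ i ∈ Ij, eps (σ i) * (ap * vp i t) :=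
          (Finset.mul_sum _ _ _).symm
  have hQ2 : ∑ σ : Fin m → Bool, (⨆ t, ∑ i ∈ Ij, eps (σ i) * (am * ℓ (-vm i t)))
      ≤ ρ * ∑ σ : Fin m → Bool, (⨆ t, ∑ i ∈ Ij, eps (σ i) * (am * vm i t)) := by
    have e1 : ∀ σ : Fin m → Bool,
        (⨆ t, ∑ i ∈ Ij, eps (σ i) * (am * ℓ (-vm i t)))
          = ⨆ t, (∑ i ∈ Ij, eps (σ i) * (am * ℓ (-vm i t)) + 0) :=
      fun σ => iSup_congr fun t => by ring
    have e2 : ∀ σ : Fin m → Bool,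
        (⨆ t, (∑ i ∈ Ij, eps (σ i) * (ρ * (am * vm i t)) + 0))
          = ρ * ⨆ t, ∑ i ∈ Ij, eps (σ i) * (am * vm i t) := by
      intro σ
      have e3 : ∀ t, ∑ i ∈ Ij, eps (σ i) * (ρ * (am * vm i t)) + 0
          = ρ * ∑ i ∈ Ij, eps (σ i) * (am * vm i t) := by
        intro t
        rw [add_zero, Finset.mul_sum]
        exact Finset.sum_congr rfl fun i _ => by ring
      calc (⨆ t, (∑ i ∈ Ij, eps (σ i) * (ρ * (am * vm i t)) + 0))
          = ⨆ t, ρ * ∑ i ∈ Ij, eps (σ i) * (am * vm i t) := iSup_congr e3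
        _ = ρ * ⨆ t, ∑ i ∈ Ij, eps (σ i) * (am * vm i t) :=
            (Real.mul_iSup_of_nonneg hρ _).symm
    calc ∑ σ : Fin m → Bool, (⨆ t, ∑ i ∈ Ij, eps (σ i) * (am * ℓ (-vm i t)))
        = ∑ σ : Fin m → Bool, ⨆ t, (∑ i ∈ Ij, eps (σ i) * (am * ℓ (-vm i t)) + 0) :=
          Finset.sum_congr rfl fun σ _ => e1 σ
      _ ≤ ∑ σ : Fin m → Bool, ⨆ t, (∑ i ∈ Ij, eps (σ i) * (ρ * (am * vm i t)) + 0) :=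
          hcontrQ
      _ = ∑ σ : Fin m → Bool, ρ * ⨆ t, ∑ i ∈ Ij, eps (σ i) * (am * vm i t) :=
          Finset.sum_congr rfl fun σ _ => e2 σ
      _ = ρ * ∑ σ : Fin m → Bool, ⨆ t, ∑ i ∈ Ij, eps (σ i) * (am * vm i t) :=
          (Finset.mul_sum _ _ _).symm
  -- splitting the loss
  have hbddP1 : ∀ σ : Fin m → Bool,
      BddAbove (Set.range fun t => ∑ i ∈ Ij, eps (σ i) * (ap * ℓ (vp i t))) := by
    intro σ
    exact bdd_of_le (fun t => sum_eps_le (fun i hi => hFMP i hi t) σ)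
      (bdd_const_mul (Nat.cast_nonneg _) hMbdd)
  have hbddQ1 : ∀ σ : Fin m → Bool,
      BddAbove (Set.range fun t => ∑ i ∈ Ij, eps (σ i) * (am * ℓ (-vm i t))) := by
    intro σ
    exact bdd_of_le (fun t => sum_eps_le (fun i hi => hFMQ i hi t) σ)
      (bdd_const_mul (Nat.cast_nonneg _) hMbdd)
  have hsplit : ∀ σ : Fin m → Bool,
      (⨆ t, ∑ i ∈ Ij, eps (σ i) * (ap * ℓ (vp i t) + am * ℓ (-vm i t)))
        ≤ (⨆ t, ∑ i ∈ Ij, eps (σ i) * (ap * ℓ (vp i t)))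
          + (⨆ t, ∑ i ∈ Ij, eps (σ i) * (am * ℓ (-vm i t))) := by
    intro σ
    refine ciSup_le fun t => ?_
    have e : ∑ i ∈ Ij, eps (σ i) * (ap * ℓ (vp i t) + am * ℓ (-vm i t))
        = (∑ i ∈ Ij, eps (σ i) * (ap * ℓ (vp i t)))
          + ∑ i ∈ Ij, eps (σ i) * (am * ℓ (-vm i t)) := by
      rw [← Finset.sum_add_distrib]
      exact Finset.sum_congr rfl fun i _ => by ring
    rw [e]
    exact add_le_add (le_ciSup (hbddP1 σ) t) (le_ciSup (hbddQ1 σ) t)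
  -- passing to the two-sign complexity
  have hcard : ((Finset.univ : Finset (Fin m → Bool)).card : ℝ) = 2 ^ m := by
    rw [Finset.card_univ]
    simp [Fintype.card_fun]
  have h2mpos : (0:ℝ) < 2 ^ m := by positivity
  have hPR : ∀ σp : Fin m → Bool,
      (⨆ t, ∑ i ∈ Ij, eps (σp i) * (ap * vp i t))
        ≤ ((2:ℝ)^m)⁻¹ * ∑ σm : Fin m → Bool, ⨆ t, ∑ i ∈ Ij,
            (eps (σp i) * (ap * vp i t) + eps (σm i) * (am * vm i t)) := by
    intro σp
    refine ciSup_le fun t => ?_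
    have hzero : ∑ σm : Fin m → Bool, ∑ i ∈ Ij, eps (σm i) * (am * vm i t) = 0 := by
      rw [Finset.sum_comm]
      refine Finset.sum_eq_zero fun i _ => ?_
      rw [← Finset.sum_mul, sum_eps_zero, zero_mul]
    have hsum : ∑ σm : Fin m → Bool, ∑ i ∈ Ij,
        (eps (σp i) * (ap * vp i t) + eps (σm i) * (am * vm i t))
        = (2:ℝ)^m * ∑ i ∈ Ij, eps (σp i) * (ap * vp i t) := by
      calc ∑ σm : Fin m → Bool, ∑ i ∈ Ij,
          (eps (σp i) * (ap * vp i t) + eps (σm i) * (am * vm i t))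
          = ∑ σm : Fin m → Bool, ((∑ i ∈ Ij, eps (σp i) * (ap * vp i t))
              + ∑ i ∈ Ij, eps (σm i) * (am * vm i t)) :=
            Finset.sum_congr rfl fun σm _ => Finset.sum_add_distrib
        _ = (2:ℝ)^m * ∑ i ∈ Ij, eps (σp i) * (ap * vp i t) := by
            rw [Finset.sum_add_distrib, hzero, Finset.sum_const, nsmul_eq_mul,
              hcard, add_zero]
    have hineq : ∑ σm : Fin m → Bool, ∑ i ∈ Ij,
        (eps (σp i) * (ap * vp i t) + eps (σm i) * (am * vm i t))
        ≤ ∑ σm : Fin m → Bool, ⨆ u, ∑ i ∈ Ij,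
            (eps (σp i) * (ap * vp i u) + eps (σm i) * (am * vm i u)) :=
      Finset.sum_le_sum fun σm _ => le_ciSup (hbdd₂ σp σm) t
    have hfin := mul_le_mul_of_nonneg_left hineq (inv_nonneg.mpr h2mpos.le)
    calc ∑ i ∈ Ij, eps (σp i) * (ap * vp i t)
        = ((2:ℝ)^m)⁻¹ * ∑ σm : Fin m → Bool, ∑ i ∈ Ij,
            (eps (σp i) * (ap * vp i t) + eps (σm i) * (am * vm i t)) := by
          rw [hsum, ← mul_assoc, inv_mul_cancel₀ (ne_of_gt h2mpos), one_mul]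
      _ ≤ ((2:ℝ)^m)⁻¹ * ∑ σm : Fin m → Bool, ⨆ u, ∑ i ∈ Ij,
            (eps (σp i) * (ap * vp i u) + eps (σm i) * (am * vm i u)) := hfin
  have hQR : ∀ σm : Fin m → Bool,
      (⨆ t, ∑ i ∈ Ij, eps (σm i) * (am * vm i t))
        ≤ ((2:ℝ)^m)⁻¹ * ∑ σp : Fin m → Bool, ⨆ t, ∑ i ∈ Ij,
            (eps (σp i) * (ap * vp i t) + eps (σm i) * (am * vm i t)) := by
    intro σm
    refine ciSup_le fun t => ?_
    have hzero : ∑ σp : Fin m → Bool, ∑ i ∈ Ij, eps (σp i) * (ap * vp i t) = 0 := by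
      rw [Finset.sum_comm]
      refine Finset.sum_eq_zero fun i _ => ?_
      rw [← Finset.sum_mul, sum_eps_zero, zero_mul]
    have hsum : ∑ σp : Fin m → Bool, ∑ i ∈ Ij,
        (eps (σp i) * (ap * vp i t) + eps (σm i) * (am * vm i t))
        = (2:ℝ)^m * ∑ i ∈ Ij, eps (σm i) * (am * vm i t) := by
      calc ∑ σp : Fin m → Bool, ∑ i ∈ Ij,
          (eps (σp i) * (ap * vp i t) + eps (σm i) * (am * vm i t))
          = ∑ σp : Fin m → Bool, ((∑ i ∈ Ij, eps (σp i) * (ap * vp i t))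
              + ∑ i ∈ Ij, eps (σm i) * (am * vm i t)) :=
            Finset.sum_congr rfl fun σp _ => Finset.sum_add_distrib
        _ = (2:ℝ)^m * ∑ i ∈ Ij, eps (σm i) * (am * vm i t) := by
            rw [Finset.sum_add_distrib, hzero, Finset.sum_const, nsmul_eq_mul,
              hcard, zero_add]
    have hineq : ∑ σp : Fin m → Bool, ∑ i ∈ Ij,
        (eps (σp i) * (ap * vp i t) + eps (σm i) * (am * vm i t))
        ≤ ∑ σp : Fin m → Bool, ⨆ u, ∑ i ∈ Ij,
            (eps (σp i) * (ap * vp i u) + eps (σm i) * (am * vm i u)) :=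
      Finset.sum_le_sum fun σp _ => le_ciSup (hbdd₂ σp σm) t
    have hfin := mul_le_mul_of_nonneg_left hineq (inv_nonneg.mpr h2mpos.le)
    calc ∑ i ∈ Ij, eps (σm i) * (am * vm i t)
        = ((2:ℝ)^m)⁻¹ * ∑ σp : Fin m → Bool, ∑ i ∈ Ij,
            (eps (σp i) * (ap * vp i t) + eps (σm i) * (am * vm i t)) := by
          rw [hsum, ← mul_assoc, inv_mul_cancel₀ (ne_of_gt h2mpos), one_mul]
      _ ≤ ((2:ℝ)^m)⁻¹ * ∑ σp : Fin m → Bool, ⨆ u, ∑ i ∈ Ij,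
            (eps (σp i) * (ap * vp i u) + eps (σm i) * (am * vm i u)) := hfin
  -- final combination
  have hprod : ∑ p : (Fin m → Bool) × (Fin m → Bool), (⨆ t, ∑ i ∈ Ij,
        (eps (p.1 i) * (ap * vp i t) + eps (p.2 i) * (am * vm i t)))
      = ∑ σp : Fin m → Bool, ∑ σm : Fin m → Bool, (⨆ t, ∑ i ∈ Ij,
          (eps (σp i) * (ap * vp i t) + eps (σm i) * (am * vm i t))) :=
    Fintype.sum_prod_type _
  calc ∑ σ : Fin m → Bool, ⨆ t, ∑ i ∈ Ij, eps (σ i) *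
        (ap * ℓ (vp i t) + am * ℓ (-vm i t))
      ≤ ∑ σ : Fin m → Bool, ((⨆ t, ∑ i ∈ Ij, eps (σ i) * (ap * ℓ (vp i t)))
          + (⨆ t, ∑ i ∈ Ij, eps (σ i) * (am * ℓ (-vm i t)))) :=
        Finset.sum_le_sum fun σ _ => hsplit σ
    _ = (∑ σ : Fin m → Bool, ⨆ t, ∑ i ∈ Ij, eps (σ i) * (ap * ℓ (vp i t)))
          + ∑ σ : Fin m → Bool, ⨆ t, ∑ i ∈ Ij, eps (σ i) * (am * ℓ (-vm i t)) :=
        Finset.sum_add_distrib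
    _ ≤ ρ * (∑ σ : Fin m → Bool, ⨆ t, ∑ i ∈ Ij, eps (σ i) * (ap * vp i t))
          + ρ * ∑ σ : Fin m → Bool, ⨆ t, ∑ i ∈ Ij, eps (σ i) * (am * vm i t) :=
        add_le_add hP2 hQ2
    _ ≤ ρ * (∑ σp : Fin m → Bool, ((2:ℝ)^m)⁻¹ * ∑ σm : Fin m → Bool,
            ⨆ t, ∑ i ∈ Ij, (eps (σp i) * (ap * vp i t) + eps (σm i) * (am * vm i t)))
          + ρ * ∑ σm : Fin m → Bool, ((2:ℝ)^m)⁻¹ * ∑ σp : Fin m → Bool,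
            ⨆ t, ∑ i ∈ Ij, (eps (σp i) * (ap * vp i t) + eps (σm i) * (am * vm i t)) :=
        add_le_add
          (mul_le_mul_of_nonneg_left (Finset.sum_le_sum fun σp _ => hPR σp) hρ)
          (mul_le_mul_of_nonneg_left (Finset.sum_le_sum fun σm _ => hQR σm) hρ)
    _ = 2 * ρ * (((2 : ℝ) ^ m)⁻¹ *
          ∑ p : (Fin m → Bool) × (Fin m → Bool), ⨆ t, ∑ i ∈ Ij,
            (eps (p.1 i) * (ap * vp i t) + eps (p.2 i) * (am * vm i t))) := by
        rw [hprod]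
        rw [show ∑ σm : Fin m → Bool, ((2:ℝ)^m)⁻¹ * ∑ σp : Fin m → Bool,
            (⨆ t, ∑ i ∈ Ij, (eps (σp i) * (ap * vp i t) + eps (σm i) * (am * vm i t)))
            = ∑ σp : Fin m → Bool, ((2:ℝ)^m)⁻¹ * ∑ σm : Fin m → Bool,
            (⨆ t, ∑ i ∈ Ij, (eps (σp i) * (ap * vp i t) + eps (σm i) * (am * vm i t)))
          from by rw [← Finset.mul_sum, ← Finset.mul_sum, Finset.sum_comm]]
        rw [← Finset.mul_sum]
        ring


lemma finalstep {J : ℕ} (w A B : Fin J → ℝ) (hw : ∀ j, 0 ≤ w j)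
    (c ρ2 : ℝ) (hc : 0 ≤ c) (hk : ∀ j, A j ≤ ρ2 * (c * B j)) :
    c * ∑ j : Fin J, w j * A j ≤ ρ2 * ((c * c) * ∑ j : Fin J, w j * B j) := by
  calc c * ∑ j : Fin J, w j * A j = ∑ j : Fin J, c * (w j * A j) :=
        Finset.mul_sum _ _ _
    _ ≤ ∑ j : Fin J, c * (w j * (ρ2 * (c * B j))) :=
        Finset.sum_le_sum fun j _ =>
          mul_le_mul_of_nonneg_left (mul_le_mul_of_nonneg_left (hk j) (hw j)) hc
    _ = ∑ j : Fin J, ρ2 * ((c * c) * (w j * B j)) :=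
        Finset.sum_congr rfl fun j _ => by ring
    _ = ρ2 * ∑ j : Fin J, (c * c) * (w j * B j) := (Finset.mul_sum _ _ _).symm
    _ = ρ2 * ((c * c) * ∑ j : Fin J, w j * B j) := by rw [← Finset.mul_sum]

end
end FRCU

/-- **Contraction inequality for the (reweighted) univariate loss**
(Lemma `lem:app_contraction_univariate`), with Rademacher expectations realized
as finite averages over sign vectors. -/
theorem fractional_rademacher_contraction_univariate
    (T : Type*) [Nonempty T] (m : ℕ) (J : ℕ)
    (I : Fin J → Finset (Fin m)) (w : Fin J → ℝ) (hw : ∀ j, 0 < w j)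
    (vp vm : Fin m → T → ℝ) (ap am : ℝ) (hap : 0 ≤ ap) (ham : 0 ≤ am)
    (ℓ : ℝ → ℝ) (ρ : ℝ) (hℓ : ∀ a b, |ℓ a - ℓ b| ≤ ρ * |a - b|)
    (hbdd₁ : ∀ (σ : Fin m → Bool) (j : Fin J), BddAbove
      (Set.range fun t => ∑ i ∈ I j, (if σ i then (1 : ℝ) else -1) *
        (ap * ℓ (vp i t) + am * ℓ (-vm i t))))
    (hbdd₂ : ∀ (σp σm : Fin m → Bool) (j : Fin J), BddAbove
      (Set.range fun t => ∑ i ∈ I j,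
        ((if σp i then (1 : ℝ) else -1) * (ap * vp i t)
          + (if σm i then (1 : ℝ) else -1) * (am * vm i t)))) :
    ((2 : ℝ) ^ m)⁻¹ * ∑ σ : Fin m → Bool, ∑ j : Fin J, w j *
        ⨆ t : T, ∑ i ∈ I j, (if σ i then (1 : ℝ) else -1) *
          (ap * ℓ (vp i t) + am * ℓ (-vm i t))
      ≤ 2 * ρ * (((2 : ℝ) ^ (2 * m))⁻¹ *
          ∑ σ : (Fin m → Bool) × (Fin m → Bool), ∑ j : Fin J, w j *
            ⨆ t : T, ∑ i ∈ I j,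
              ((if σ.1 i then (1 : ℝ) else -1) * (ap * vp i t)
                + (if σ.2 i then (1 : ℝ) else -1) * (am * vm i t))) := by
  classical
  have hρ : 0 ≤ ρ := by
    have h := (abs_nonneg (ℓ 0 - ℓ 1)).trans (hℓ 0 1)
    simpa using h
  have epsdef : ∀ b : Bool, (if b then (1 : ℝ) else -1) = FRCU.eps b := fun _ => rfl
  simp only [epsdef]
  have hkey : ∀ j : Fin J,
      ∑ σ : Fin m → Bool, ⨆ t : T, ∑ i ∈ I j, FRCU.eps (σ i) *
          (ap * ℓ (vp i t) + am * ℓ (-vm i t))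
        ≤ 2 * ρ * (((2 : ℝ) ^ m)⁻¹ * ∑ p : (Fin m → Bool) × (Fin m → Bool),
            ⨆ t : T, ∑ i ∈ I j, (FRCU.eps (p.1 i) * (ap * vp i t)
              + FRCU.eps (p.2 i) * (am * vm i t))) :=
    fun j => FRCU.perj (I j) vp vm ap am ρ hap ham hρ ℓ hℓ
      (fun σp σm => hbdd₂ σp σm j)
  have hL : ∑ σ : Fin m → Bool, ∑ j : Fin J, w j * (⨆ t : T, ∑ i ∈ I j,
        FRCU.eps (σ i) * (ap * ℓ (vp i t) + am * ℓ (-vm i t)))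
      = ∑ j : Fin J, w j * ∑ σ : Fin m → Bool, ⨆ t : T, ∑ i ∈ I j,
          FRCU.eps (σ i) * (ap * ℓ (vp i t) + am * ℓ (-vm i t)) := by
    rw [Finset.sum_comm]
    exact Finset.sum_congr rfl fun j _ => (Finset.mul_sum _ _ _).symm
  have hR : ∑ p : (Fin m → Bool) × (Fin m → Bool), ∑ j : Fin J, w j *
        (⨆ t : T, ∑ i ∈ I j, (FRCU.eps (p.1 i) * (ap * vp i t)
          + FRCU.eps (p.2 i) * (am * vm i t)))
      = ∑ j : Fin J, w j * ∑ p : (Fin m → Bool) × (Fin m → Bool),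
          ⨆ t : T, ∑ i ∈ I j, (FRCU.eps (p.1 i) * (ap * vp i t)
            + FRCU.eps (p.2 i) * (am * vm i t)) := by
    rw [Finset.sum_comm]
    exact Finset.sum_congr rfl fun j _ => (Finset.mul_sum _ _ _).symm
  rw [hL, hR]
  have h2m : ((2 : ℝ) ^ (2 * m))⁻¹ = ((2 : ℝ) ^ m)⁻¹ * ((2 : ℝ) ^ m)⁻¹ := by
    rw [two_mul, pow_add, mul_inv]
  rw [h2m]
  exact FRCU.finalstep w _ _ (fun j => (hw j).le) _ _
    (by positivity) hkey
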